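/- Let X and Y be standard Gaussian random variables with covariance Cov(X,Y) = 1 - c where 0 < c < 1/4. Then for a sufficiently large (a ≫ 1), P(X > a, Y > a(1 - c/4)) ≤ (1/(a² · 2π · c)) · e^{-a²/2} · (e^{-c a²/32} + e^{-3 c a²/8}). -/

import Mathlib

open MeasureTheory ProbabilityTheory Real

section CorrelatedGaussianTailAux
open Filter

lemma integral_self_mul_exp_Ioi {t : ℝ} (ht : 0 < t) :
    ∫ x in Set.Ioi t, x * Real.exp (-x ^ 2 / 2) = Real.exp (-t ^ 2 / 2) := by
  have hderiv : ∀ x ∈ Set.Ioi t,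
      HasDerivAt (fun x : ℝ => -Real.exp (-x ^ 2 / 2)) (x * Real.exp (-x ^ 2 / 2)) x := by
    intro x _
    have h1 : HasDerivAt (fun x : ℝ => -x ^ 2 / 2) (-x) x := by
      have := ((hasDerivAt_pow 2 x).neg).div_const 2
      exact this.congr_deriv (by norm_num; ring)
    have h2 := (h1.exp).neg
    exact h2.congr_deriv (by ring)
  have hint : IntegrableOn (fun x : ℝ => x * Real.exp (-x ^ 2 / 2)) (Set.Ioi t) := by
    have h := (integrable_rpow_mul_exp_neg_mul_sq (by norm_num : (0:ℝ) < 1/2)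
      (by norm_num : (-1:ℝ) < 1)).integrableOn (s := Set.Ioi t)
    refine h.congr_fun (fun x _ => ?_) measurableSet_Ioi
    dsimp only
    rw [Real.rpow_one]
    congr 1
    ring_nf
  have hten : Tendsto (fun x : ℝ => -Real.exp (-x ^ 2 / 2)) atTop (nhds 0) := by
    have h1 : Tendsto (fun x : ℝ => -x ^ 2 / 2) atTop atBot := by
      have h2 : Tendsto (fun x : ℝ => x ^ 2 / 2) atTop atTop :=
        (tendsto_pow_atTop (two_ne_zero)).atTop_div_const (by norm_num)
      have := tendsto_neg_atTop_atBot.comp h2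
      refine this.congr (fun x => ?_)
      simp [neg_div]
    have := (Real.tendsto_exp_atBot.comp h1).neg
    rw [neg_zero] at this; exact this
  have hcont : ContinuousWithinAt (fun x : ℝ => -Real.exp (-x ^ 2 / 2)) (Set.Ici t) t := by
    apply Continuous.continuousWithinAt
    continuity
  have := integral_Ioi_of_hasDerivAt_of_tendsto hcont hderiv hint hten
  rw [this]
  ring

lemma integrableOn_exp_Ioi (t : ℝ) :
    IntegrableOn (fun x : ℝ => Real.exp (-x ^ 2 / 2)) (Set.Ioi t) := by
  have h := (integrable_exp_neg_mul_sq (by norm_num : (0:ℝ) < 1/2)).integrableOn (s := Set.Ioi t)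
  refine h.congr_fun (fun x _ => ?_) measurableSet_Ioi
  congr 1
  ring

lemma gaussian_tail {t : ℝ} (ht : 0 < t) :
    ((gaussianReal 0 1) (Set.Ioi t)).toReal
      ≤ (Real.sqrt (2 * Real.pi))⁻¹ * t⁻¹ * Real.exp (-t ^ 2 / 2) := by
  rw [gaussianReal_apply_eq_integral 0 one_ne_zero]
  rw [ENNReal.toReal_ofReal (setIntegral_nonneg measurableSet_Ioi
    (fun x _ => gaussianPDFReal_nonneg 0 1 x))]
  have hpdf : ∀ x : ℝ, gaussianPDFReal 0 1 x
      = (Real.sqrt (2 * Real.pi))⁻¹ * Real.exp (-x ^ 2 / 2) := by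
    intro x
    simp [gaussianPDFReal]
  simp_rw [hpdf]
  rw [MeasureTheory.integral_const_mul]
  rw [mul_assoc]
  refine mul_le_mul_of_nonneg_left ?_ (by positivity)
  have key : ∫ x in Set.Ioi t, Real.exp (-x ^ 2 / 2)
      ≤ ∫ x in Set.Ioi t, t⁻¹ * (x * Real.exp (-x ^ 2 / 2)) := by
    refine setIntegral_mono_on (integrableOn_exp_Ioi t) ?_ measurableSet_Ioi ?_
    · have h := (integrable_rpow_mul_exp_neg_mul_sq (by norm_num : (0:ℝ) < 1/2)
        (by norm_num : (-1:ℝ) < 1)).integrableOn (s := Set.Ioi t)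
      refine ((h.congr_fun (fun x _ => ?_) measurableSet_Ioi).const_mul t⁻¹)
      rw [Real.rpow_one]
      congr 1
      ring_nf
    · intro x hx
      have hx' : t < x := hx
      have h1 : 1 ≤ t⁻¹ * x := by
        rw [← div_eq_inv_mul, le_div_iff₀ ht]
        linarith
      nlinarith [Real.exp_pos (-x ^ 2 / 2)]
  calc ∫ x in Set.Ioi t, Real.exp (-x ^ 2 / 2)
      ≤ ∫ x in Set.Ioi t, t⁻¹ * (x * Real.exp (-x ^ 2 / 2)) := key
    _ = t⁻¹ * ∫ x in Set.Ioi t, x * Real.exp (-x ^ 2 / 2) := MeasureTheory.integral_const_mul _ _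
    _ = t⁻¹ * Real.exp (-t ^ 2 / 2) := by rw [integral_self_mul_exp_Ioi ht]

set_option maxHeartbeats 1000000 in
private lemma correlated_gaussian_tail_key1 (c a s ε₁ : ℝ) (hc0 : 0 < c) (hc4 : c < 1/4)
    (ha0 : 0 < a) (hs1 : 1 ≤ s) (h2π : 2 ≤ Real.sqrt (2 * π))
    (hε₁def : ε₁ = s ^ 2 - 1 - 3 * c / 4) (hε₁ : 45 * c ^ 2 / 64 ≤ ε₁)
    (ha : 1024 / c ^ 2 ≤ a) : (Real.sqrt (2 * π))⁻¹ * (a * s)⁻¹ * Real.exp (-(a * s) ^ 2 / 2)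
    ≤ (a ^ 2 * (2 * π) * c)⁻¹ * Real.exp (-a ^ 2 / 2) * Real.exp (-3 * c * a ^ 2 / 8) := by
  have hsplit : Real.exp (-(a * s) ^ 2 / 2)
      = Real.exp (-a ^ 2 / 2) * Real.exp (-3 * c * a ^ 2 / 8) * Real.exp (-(ε₁ * a ^ 2 / 2)) := by
    rw [← Real.exp_add, ← Real.exp_add]
    congr 1
    rw [hε₁def]; ring
  rw [hsplit]
  rw [show (Real.sqrt (2 * π))⁻¹ * (a * s)⁻¹ *
      (Real.exp (-a ^ 2 / 2) * Real.exp (-3 * c * a ^ 2 / 8) * Real.exp (-(ε₁ * a ^ 2 / 2)))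
      = ((Real.sqrt (2 * π))⁻¹ * (a * s)⁻¹ * Real.exp (-(ε₁ * a ^ 2 / 2))) *
        Real.exp (-a ^ 2 / 2) * Real.exp (-3 * c * a ^ 2 / 8) by ring]
  refine mul_le_mul_of_nonneg_right (mul_le_mul_of_nonneg_right ?_ (Real.exp_pos _).le)
    (Real.exp_pos _).le
  rw [Real.exp_neg, ← mul_inv, ← mul_inv]
  refine inv_anti₀ (by positivity) ?_
  -- a^2 * (2π) * c ≤ √(2π) * (a*s) * exp(ε₁ a²/2)
  have hE : ε₁ * a ^ 2 / 2 ≤ Real.exp (ε₁ * a ^ 2 / 2) := by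
    linarith [Real.add_one_le_exp (ε₁ * a ^ 2 / 2)]
  have hE2 : 45 * c ^ 2 / 128 * a ^ 2 ≤ Real.exp (ε₁ * a ^ 2 / 2) := by nlinarith
  have hstep : a ^ 2 * (2 * π) * c ≤ 2 * a * (45 * c ^ 2 / 128 * a ^ 2) := by
    have hac : 2 * π * c ≤ 45 * c ^ 2 / 64 * a := by
      have : 1024 / c ^ 2 ≤ a := ha
      rw [div_le_iff₀ (by positivity)] at this
      nlinarith [Real.pi_lt_d2]
    nlinarith
  calc a ^ 2 * (2 * π) * c ≤ 2 * a * (45 * c ^ 2 / 128 * a ^ 2) := hstep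
    _ ≤ Real.sqrt (2 * π) * (a * s) * Real.exp (ε₁ * a ^ 2 / 2) := by
        have h1 : 2 * a ≤ Real.sqrt (2 * π) * (a * s) := by
          have h2 : a ≤ a * s := by nlinarith
          have := mul_le_mul h2π h2 ha0.le (le_trans (by norm_num) h2π)
          linarith
        nlinarith [Real.exp_pos (ε₁ * a ^ 2 / 2)]

set_option maxHeartbeats 1000000 in
private lemma correlated_gaussian_tail_key2 (c a r ε₂ : ℝ) (hc0 : 0 < c)
    (ha0 : 0 < a) (hrpos : 0 < r) (hrge : 3 * c / 8 ≤ r) (h2π : 2 ≤ Real.sqrt (2 * π))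
    (hε₂def : ε₂ = r ^ 2 - c / 16) (hε₂ : c / 128 ≤ ε₂)
    (haa : 1024 / c ≤ a ^ 2) : ((Real.sqrt (2 * π))⁻¹ * a⁻¹ * Real.exp (-a ^ 2 / 2)) *
      ((Real.sqrt (2 * π))⁻¹ * (a * r)⁻¹ * Real.exp (-(a * r) ^ 2 / 2))
    ≤ (a ^ 2 * (2 * π) * c)⁻¹ * Real.exp (-a ^ 2 / 2) * Real.exp (-c * a ^ 2 / 32) := by
  have hsplit : Real.exp (-(a * r) ^ 2 / 2)
      = Real.exp (-c * a ^ 2 / 32) * Real.exp (-(ε₂ * a ^ 2 / 2)) := by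
    rw [← Real.exp_add]
    congr 1
    rw [hε₂def]; ring
  rw [hsplit]
  have hid : ((Real.sqrt (2 * π))⁻¹ * a⁻¹ * Real.exp (-a ^ 2 / 2)) *
      ((Real.sqrt (2 * π))⁻¹ * (a * r)⁻¹ * (Real.exp (-c * a ^ 2 / 32) * Real.exp (-(ε₂ * a ^ 2 / 2))))
      = ((Real.sqrt (2 * π) * a * (Real.sqrt (2 * π) * (a * r)) * Real.exp (ε₂ * a ^ 2 / 2))⁻¹) *
        Real.exp (-a ^ 2 / 2) * Real.exp (-c * a ^ 2 / 32) := by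
    rw [Real.exp_neg (ε₂ * a ^ 2 / 2)]
    field_simp
  rw [hid]
  refine mul_le_mul_of_nonneg_right (mul_le_mul_of_nonneg_right ?_ (Real.exp_pos _).le)
    (Real.exp_pos _).le
  refine inv_anti₀ (by positivity) ?_
  have hsq : Real.sqrt (2 * π) * Real.sqrt (2 * π) = 2 * π :=
    Real.mul_self_sqrt (by positivity)
  have hE : ε₂ * a ^ 2 / 2 ≤ Real.exp (ε₂ * a ^ 2 / 2) := by
    linarith [Real.add_one_le_exp (ε₂ * a ^ 2 / 2)]
  have hE2 : (4:ℝ) ≤ Real.exp (ε₂ * a ^ 2 / 2) := by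
    have h1 : c / 128 * a ^ 2 / 2 ≤ ε₂ * a ^ 2 / 2 := by nlinarith
    have h2 : (4:ℝ) ≤ c / 128 * a ^ 2 / 2 := by
      rw [div_le_iff₀ hc0] at haa
      nlinarith
    linarith
  -- goal : a^2 * (2π) * c ≤ √2π * a * (√2π * (a * r)) * exp(...)
  have hre : Real.sqrt (2 * π) * a * (Real.sqrt (2 * π) * (a * r))
      = 2 * π * a ^ 2 * r := by
    rw [show Real.sqrt (2 * π) * a * (Real.sqrt (2 * π) * (a * r))
        = (Real.sqrt (2 * π) * Real.sqrt (2 * π)) * (a * (a * r)) from by ring, hsq]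
    ring
  rw [hre]
  have h3 : c ≤ r * Real.exp (ε₂ * a ^ 2 / 2) := by nlinarith
  have h4 := mul_le_mul_of_nonneg_left h3 (show (0:ℝ) ≤ 2 * π * a ^ 2 by positivity)
  nlinarith [h4]

end CorrelatedGaussianTailAux

/-- The joint law of a centered Gaussian pair with unit variances and covariance
`1 - c`. -/
noncomputable def bivGaussianLaw (c : ℝ) : Measure (ℝ × ℝ) :=
  Measure.map (fun z : ℝ × ℝ => (z.1, (1 - c) * z.1 + Real.sqrt (2 * c - c ^ 2) * z.2))
    ((gaussianReal 0 1).prod (gaussianReal 0 1))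

set_option maxHeartbeats 1000000 in
/-- For `X, Y` standard Gaussian with covariance `1 - c`, `0 < c < 1/4`, and all
sufficiently large `a`,
`P(X > a, Y > a(1-c/4)) ≤ (a² 2π c)⁻¹ e^{-a²/2} (e^{-ca²/32} + e^{-3ca²/8})`. -/
theorem correlated_gaussian_tail {Ω : Type*} [MeasurableSpace Ω] (μ : Measure Ω)
    [IsProbabilityMeasure μ] (X Y : Ω → ℝ) (c : ℝ) (hc : c ∈ Set.Ioo (0:ℝ) (1/4))
    (hlaw : Measure.map (fun ω => (X ω, Y ω)) μ = bivGaussianLaw c) :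
    ∃ a₀ : ℝ, ∀ a : ℝ, a₀ ≤ a →
      (μ {ω | a < X ω ∧ a * (1 - c / 4) < Y ω}).toReal
        ≤ (a ^ 2 * (2 * π) * c)⁻¹ * Real.exp (-a ^ 2 / 2) *
            (Real.exp (-c * a ^ 2 / 32) + Real.exp (-3 * c * a ^ 2 / 8)) := by
  obtain ⟨hc0, hc4⟩ := hc
  have h1c : (0:ℝ) < 1 - c := by linarith
  set σ : ℝ := Real.sqrt (2 * c - c ^ 2) with hσdef
  have hσsq : σ ^ 2 = 2 * c - c ^ 2 := Real.sq_sqrt (by nlinarith)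
  have hσpos : 0 < σ := Real.sqrt_pos.mpr (by nlinarith)
  have h2c : (0:ℝ) < 2 - c := by linarith
  have hσle : σ ≤ 1 := Real.sqrt_le_one.mpr (by nlinarith)
  set s : ℝ := (1 - 5 * c / 8) / (1 - c) with hsdef
  have hs1 : 1 ≤ s := by
    rw [hsdef, le_div_iff₀ h1c]; linarith
  have hs_mul : (1 - c) * s = 1 - 5 * c / 8 := by
    rw [hsdef]; field_simp
  set r : ℝ := 3 * c / (8 * σ) with hrdef
  have hrpos : 0 < r := by positivity
  have hrσ : r * σ = 3 * c / 8 := by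
    rw [hrdef]; field_simp
  have hrge : 3 * c / 8 ≤ r := by
    rw [hrdef]
    apply div_le_div_of_nonneg_left (by positivity) (by positivity)
    nlinarith
  -- exponent slacks
  set ε₁ : ℝ := s ^ 2 - 1 - 3 * c / 4 with hε₁def
  have hε₁ : 45 * c ^ 2 / 64 ≤ ε₁ := by
    rw [hε₁def, hsdef, div_pow, le_sub_iff_add_le, le_sub_iff_add_le, le_div_iff₀ (by positivity)]
    nlinarith
  set ε₂ : ℝ := r ^ 2 - c / 16 with hε₂def
  have hε₂ : c / 128 ≤ ε₂ := by
    have hr2 : r ^ 2 = 9 * c / (64 * (2 - c)) := by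
      rw [hrdef, div_pow, div_eq_div_iff (by positivity) (by positivity : (64 * (2 - c) : ℝ) ≠ 0)]
      linear_combination (-576 * c) * hσsq
    have h9 : c / 128 + c / 16 = 9 * c / 128 := by ring
    rw [hε₂def, hr2, le_sub_iff_add_le, h9,
      div_le_div_iff₀ (by norm_num) (by positivity : (0:ℝ) < 64 * (2 - c))]
    nlinarith
  clear_value σ s r ε₁ ε₂
  have h2π : 2 ≤ Real.sqrt (2 * π) := by
    nlinarith [Real.sq_sqrt (by positivity : (0:ℝ) ≤ 2 * π), Real.sqrt_nonneg (2 * π),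
      Real.pi_gt_three]
  have hπpos : (0:ℝ) < π := Real.pi_pos
  -- measurability facts
  have hT : Measurable (fun z : ℝ × ℝ => (z.1, (1 - c) * z.1 + σ * z.2)) :=
    measurable_fst.prodMk ((measurable_fst.const_mul _).add (measurable_snd.const_mul _))
  have hprob : IsProbabilityMeasure (bivGaussianLaw c) := by
    rw [bivGaussianLaw, ← hσdef]
    exact Measure.isProbabilityMeasure_map hT.aemeasurable
  have hXY : AEMeasurable (fun ω => (X ω, Y ω)) μ := by
    by_contra h
    rw [Measure.map_of_not_aemeasurable h] at hlaw
    exact (IsProbabilityMeasure.ne_zero (bivGaussianLaw c)) hlaw.symm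
  refine ⟨1024 / c ^ 2, fun a ha => ?_⟩
  have ha0 : 0 < a := lt_of_lt_of_le (by positivity) ha
  have ha1 : 1 ≤ a := le_trans (by rw [le_div_iff₀ (by positivity)]; nlinarith) ha
  have haa : 1024 / c ≤ a ^ 2 := by
    have : 1024 / c ≤ 1024 / c ^ 2 := by
      rw [div_le_div_iff₀ hc0 (by positivity)]; nlinarith
    nlinarith
  set b : ℝ := a * (1 - c / 4) with hbdef
  clear_value b
  -- step 1 : rewrite as bivGaussianLaw
  have hmeasset : MeasurableSet (Set.Ioi a ×ˢ Set.Ioi b) :=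
    measurableSet_Ioi.prod measurableSet_Ioi
  have hmeas : μ {ω | a < X ω ∧ b < Y ω} = bivGaussianLaw c (Set.Ioi a ×ˢ Set.Ioi b) := by
    have hset : {ω | a < X ω ∧ b < Y ω} = (fun ω => (X ω, Y ω)) ⁻¹' (Set.Ioi a ×ˢ Set.Ioi b) := by
      ext ω; simp [Set.mem_prod]
    rw [hset, ← Measure.map_apply_of_aemeasurable hXY hmeasset, hlaw]
  -- step 2 : inclusion and product bound
  set ν : Measure ℝ := gaussianReal 0 1 with hνdef
  have hbiv : bivGaussianLaw c (Set.Ioi a ×ˢ Set.Ioi b)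
      ≤ ν (Set.Ioi (a * s)) + ν (Set.Ioi a) * ν (Set.Ioi (a * r)) := by
    rw [bivGaussianLaw, ← hσdef, Measure.map_apply hT hmeasset]
    have hsub : (fun z : ℝ × ℝ => (z.1, (1 - c) * z.1 + σ * z.2)) ⁻¹' (Set.Ioi a ×ˢ Set.Ioi b)
        ⊆ (Set.Ioi (a * s) ×ˢ Set.univ) ∪ (Set.Ioi a ×ˢ Set.Ioi (a * r)) := by
      rintro ⟨z1, z2⟩ hz
      simp only [Set.mem_preimage, Set.mem_prod, Set.mem_Ioi] at hz
      obtain ⟨hz1, hz2⟩ := hz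
      rcases le_or_gt z1 (a * s) with hle | hlt
      · right
        simp only [Set.mem_prod, Set.mem_Ioi]
        refine ⟨hz1, ?_⟩
        have e1 : (1 - c) * z1 ≤ a * (1 - 5 * c / 8) := by
          calc (1 - c) * z1 ≤ (1 - c) * (a * s) := by nlinarith
            _ = a * ((1 - c) * s) := by ring
            _ = a * (1 - 5 * c / 8) := by rw [hs_mul]
        have e2 : a * (3 * c / 8) < σ * z2 := by
          have : b = a * (1 - c / 4) := hbdef
          nlinarith
        have e3 : (a * r) * σ < z2 * σ := by
          rw [show (a * r) * σ = a * (r * σ) by ring, hrσ]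
          nlinarith
        exact lt_of_mul_lt_mul_right e3 hσpos.le
      · left
        simp only [Set.mem_prod, Set.mem_Ioi, Set.mem_univ, and_true]
        exact hlt
    calc (ν.prod ν) _ ≤ (ν.prod ν) ((Set.Ioi (a * s) ×ˢ Set.univ) ∪ (Set.Ioi a ×ˢ Set.Ioi (a * r))) :=
          measure_mono hsub
      _ ≤ (ν.prod ν) (Set.Ioi (a * s) ×ˢ Set.univ) + (ν.prod ν) (Set.Ioi a ×ˢ Set.Ioi (a * r)) :=
          measure_union_le _ _
      _ = ν (Set.Ioi (a * s)) + ν (Set.Ioi a) * ν (Set.Ioi (a * r)) := by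
          rw [Measure.prod_prod, Measure.prod_prod, measure_univ, mul_one]
  -- step 3 : to real numbers
  have hfin : ∀ u : Set ℝ, ν u ≠ ⊤ := fun u => measure_ne_top ν u
  have htoReal : (μ {ω | a < X ω ∧ b < Y ω}).toReal
      ≤ (ν (Set.Ioi (a * s))).toReal + (ν (Set.Ioi a)).toReal * (ν (Set.Ioi (a * r))).toReal := by
    rw [hmeas]
    refine le_trans (ENNReal.toReal_mono ?_ hbiv) ?_
    · exact ENNReal.add_ne_top.mpr ⟨hfin _, ENNReal.mul_ne_top (hfin _) (hfin _)⟩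
    · rw [ENNReal.toReal_add (hfin _) (ENNReal.mul_ne_top (hfin _) (hfin _)), ENNReal.toReal_mul]
  -- step 4 : tail bounds
  have hG1 := gaussian_tail (t := a * s) (by positivity)
  have hG2 := gaussian_tail (t := a) ha0
  have hG3 := gaussian_tail (t := a * r) (by positivity)
  have hGnonneg : ∀ u : Set ℝ, 0 ≤ (ν u).toReal := fun u => ENNReal.toReal_nonneg
  -- step 5 : numeric inequalities
  have key1 := correlated_gaussian_tail_key1 c a s ε₁ hc0 hc4 ha0 hs1 h2π hε₁def hε₁ ha
  have key2 := correlated_gaussian_tail_key2 c a r ε₂ hc0 ha0 hrpos hrge h2π hε₂def hε₂ haa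
  -- conclude
  have hB1 : (ν (Set.Ioi (a * s))).toReal
      ≤ (a ^ 2 * (2 * π) * c)⁻¹ * Real.exp (-a ^ 2 / 2) * Real.exp (-3 * c * a ^ 2 / 8) :=
    le_trans hG1 key1
  have hB2 : (ν (Set.Ioi a)).toReal * (ν (Set.Ioi (a * r))).toReal
      ≤ (a ^ 2 * (2 * π) * c)⁻¹ * Real.exp (-a ^ 2 / 2) * Real.exp (-c * a ^ 2 / 32) := by
    refine le_trans (mul_le_mul hG2 hG3 (hGnonneg _) (by positivity)) key2
  calc (μ {ω | a < X ω ∧ b < Y ω}).toReal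
      ≤ (ν (Set.Ioi (a * s))).toReal + (ν (Set.Ioi a)).toReal * (ν (Set.Ioi (a * r))).toReal :=
        htoReal
    _ ≤ (a ^ 2 * (2 * π) * c)⁻¹ * Real.exp (-a ^ 2 / 2) * Real.exp (-3 * c * a ^ 2 / 8)
        + (a ^ 2 * (2 * π) * c)⁻¹ * Real.exp (-a ^ 2 / 2) * Real.exp (-c * a ^ 2 / 32) :=
        add_le_add hB1 hB2
    _ = (a ^ 2 * (2 * π) * c)⁻¹ * Real.exp (-a ^ 2 / 2) *
          (Real.exp (-c * a ^ 2 / 32) + Real.exp (-3 * c * a ^ 2 / 8)) := by ring
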